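/- arXiv:1712.10123 — 2 statements merged into one kernel-verified Lean document; each statement's English description precedes it below -/
import Mathlib

section
/- Any two maximal-length chains of a finite extremal lattice induce the same bijective correspondence between the join-irreducible elements and the meet-irreducible elements. -/
/-- An element `x` of a lattice is *left modular* if `(y ⊔ x) ⊓ z = y ⊔ (x ⊓ z)`
for all `y ≤ z`. -/
def LeftModular {L : Type*} [Lattice L] (x : L) : Prop :=
  ∀ y z : L, y ≤ z → (y ⊔ x) ⊓ z = y ⊔ (x ⊓ z)

/-- The data of an extremal lattice of length `n` together with a fixed
maximal-length chain `x₀ ⋖ ⋯ ⋖ xₙ` and the induced numberings of the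
join-irreducibles `j₁, …, jₙ` and meet-irreducibles `m₁, …, mₙ`. -/
structure ExtremalChainData (L : Type*) [Lattice L] [Fintype L] [BoundedOrder L]
    (n : ℕ) where
  x : Fin (n + 1) → L
  x_strictMono : StrictMono x
  x_bot : x 0 = ⊥
  x_top : x (Fin.last n) = ⊤
  maxlen : ∀ (m : ℕ) (c : Fin (m + 1) → L), StrictMono c → m ≤ n
  j : Fin n → L
  m : Fin n → L
  j_irr : ∀ i, SupIrred (j i)
  m_irr : ∀ i, InfIrred (m i)
  j_inj : Function.Injective j
  m_inj : Function.Injective m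
  j_surj : ∀ a : L, SupIrred a → a ∈ Set.range j
  m_surj : ∀ a : L, InfIrred a → a ∈ Set.range m
  x_eq_sup : ∀ i : Fin (n + 1),
    x i = (Finset.univ.filter fun k : Fin n => (k : ℕ) < (i : ℕ)).sup j
  x_eq_inf : ∀ i : Fin (n + 1),
    x i = (Finset.univ.filter fun k : Fin n => (i : ℕ) ≤ (k : ℕ)).inf m

namespace ExtremalChainData

variable {L : Type*} [Lattice L] [Fintype L] [BoundedOrder L] {n : ℕ}

/-- `x_J`: the set of indices of join-irreducibles lying below `a`. -/
def setJ (D : ExtremalChainData L n) (a : L) : Set (Fin n) := {i | D.j i ≤ a}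

/-- `x_M`: the set of indices of meet-irreducibles lying above `a`. -/
def setM (D : ExtremalChainData L n) (a : L) : Set (Fin n) := {i | a ≤ D.m i}

/-- The Galois graph: a directed edge `i → k` when `jᵢ ≰ m_k` and `i ≠ k`. -/
def galoisEdge (D : ExtremalChainData L n) (i k : Fin n) : Prop :=
  ¬ D.j i ≤ D.m k ∧ i ≠ k

/-- The left modular labelling: `i` is the label of the cover `y ⋖ z` iff `i` is
minimal with `y ⊔ (xᵢ ⊓ z) = z`. -/
def IsLabel (D : ExtremalChainData L n) (y z : L) (i : Fin n) : Prop :=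
  y ⊔ (D.x i.succ ⊓ z) = z ∧ ∀ k : Fin n, y ⊔ (D.x k.succ ⊓ z) = z → i ≤ k

open scoped Classical in
/-- `D^γ(a)`: the set of labels of cover relations below `a`. -/
noncomputable def downLabels (D : ExtremalChainData L n) (a : L) : Finset (Fin n) :=
  Finset.univ.filter fun i => ∃ y, y ⋖ a ∧ D.IsLabel y a i

open scoped Classical in
/-- `U^γ(a)`: the set of labels of cover relations above `a`. -/
noncomputable def upLabels (D : ExtremalChainData L n) (a : L) : Finset (Fin n) :=
  Finset.univ.filter fun i => ∃ z, a ⋖ z ∧ D.IsLabel a z i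

/-- The fixed chain consists of left modular elements, i.e. the lattice is trim. -/
def IsTrim (D : ExtremalChainData L n) : Prop := ∀ i, LeftModular (D.x i)

end ExtremalChainData


namespace ExtremalChainData

variable {L : Type*} [Lattice L] [Fintype L] [BoundedOrder L] {n : ℕ}

lemma j_le_x_succ (D : ExtremalChainData L n) (a : Fin n) : D.j a ≤ D.x a.succ := by
  rw [D.x_eq_sup]
  exact Finset.le_sup (Finset.mem_filter.mpr ⟨Finset.mem_univ _, by simp⟩)

lemma x_le_m (D : ExtremalChainData L n) {i : Fin (n + 1)} {b : Fin n}
    (h : (i : ℕ) ≤ (b : ℕ)) : D.x i ≤ D.m b := by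
  rw [D.x_eq_inf]
  exact Finset.inf_le (Finset.mem_filter.mpr ⟨Finset.mem_univ _, h⟩)

lemma j_le_m_of_lt (D : ExtremalChainData L n) {a b : Fin n} (h : a < b) :
    D.j a ≤ D.m b :=
  (D.j_le_x_succ a).trans (D.x_le_m (by simpa [Fin.val_succ] using h))

lemma not_j_le_m_self (D : ExtremalChainData L n) (a : Fin n) :
    ¬ D.j a ≤ D.m a := by
  intro h
  have hlt : D.x a.castSucc < D.x a.succ := D.x_strictMono (Fin.castSucc_lt_succ : a.castSucc < a.succ)
  have hle : D.x a.succ ≤ D.x a.castSucc := by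
    rw [D.x_eq_inf a.castSucc]
    refine Finset.le_inf fun k hk => ?_
    rcases Finset.mem_filter.mp hk with ⟨-, hak⟩
    rcases lt_or_eq_of_le hak with hak | hak
    · exact D.x_le_m (by simpa [Fin.val_succ] using hak)
    · -- k = a, show x a.succ ≤ m a
      have hka : k = a := Fin.ext hak.symm
      subst hka
      rw [D.x_eq_sup]
      refine Finset.sup_le fun l hl => ?_
      rcases Finset.mem_filter.mp hl with ⟨-, hla⟩
      simp only [Fin.val_succ, Nat.lt_succ_iff] at hla
      rcases lt_or_eq_of_le hla with hla | hla
      · exact D.j_le_m_of_lt hla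
      · have : l = k := Fin.ext hla
        subst this; exact h
  exact absurd hle (not_le_of_gt hlt)

end ExtremalChainData

/-- Any two maximal-length chains of an extremal lattice induce the same
correspondence between join-irreducibles and meet-irreducibles: if a
join-irreducible receives index `i` in the numbering from one chain and index
`i'` in the numbering from another, then the paired meet-irreducibles agree. -/
theorem same_correspondence {L : Type*} [Lattice L] [Fintype L] [BoundedOrder L]
    {n : ℕ} (D D' : ExtremalChainData L n) :
    ∀ i i' : Fin n, D.j i = D'.j i' → D.m i = D'.m i' := by classical
  -- build the transfer maps σ (on join-irreducibles) and τ (on meet-irreducibles)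
  have hσ : ∀ i' : Fin n, ∃ i : Fin n, D.j i = D'.j i' := fun i' =>
    D.j_surj (D'.j i') (D'.j_irr i')
  have hτ : ∀ i' : Fin n, ∃ i : Fin n, D.m i = D'.m i' := fun i' =>
    D.m_surj (D'.m i') (D'.m_irr i')
  choose σ hσ using hσ
  choose τ hτ using hτ
  have σinj : Function.Injective σ := fun a b hab => by
    have := (hσ a).symm.trans ((congrArg D.j hab).trans (hσ b))
    exact D'.j_inj this
  have τinj : Function.Injective τ := fun a b hab => by
    have := (hτ a).symm.trans ((congrArg D.m hab).trans (hτ b))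
    exact D'.m_inj this
  -- pointwise inequality τ ≤ σ
  have hle : ∀ i' : Fin n, τ i' ≤ σ i' := by
    intro i'
    by_contra hc
    push_neg at hc
    exact D'.not_j_le_m_self i'
      (hσ i' ▸ hτ i' ▸ D.j_le_m_of_lt hc)
  -- equal sums force σ = τ
  have hsum : ∑ i : Fin n, ((σ i : ℕ)) = ∑ i : Fin n, ((τ i : ℕ)) := by
    rw [Function.Bijective.sum_comp (Finite.injective_iff_bijective.mp σinj)
      (fun i : Fin n => (i : ℕ)),
      Function.Bijective.sum_comp (Finite.injective_iff_bijective.mp τinj)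
      (fun i : Fin n => (i : ℕ))]
  have heq : ∀ i' : Fin n, σ i' = τ i' := by
    intro i'
    by_contra hc
    have hlt : (τ i' : ℕ) < (σ i' : ℕ) :=
      lt_of_le_of_ne (hle i') (fun h => hc (Fin.ext h.symm))
    have : ∑ i : Fin n, ((τ i : ℕ)) < ∑ i : Fin n, ((σ i : ℕ)) :=
      Finset.sum_lt_sum (fun i _ => hle i) ⟨i', Finset.mem_univ _, hlt⟩
    omega
  intro i i' h
  have hi : σ i' = i := D.j_inj ((hσ i').trans h.symm)
  have : τ i' = i := (heq i').symm.trans hi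
  rw [← hτ i', this]
end

section
/- An extremal lattice L is trim (i.e., additionally left modular) if and only if every cover relation y ⋖ z in L is overlapping, meaning y_M ∩ z_J ≠ ∅, if and only if every relation y < z is overlapping. -/
open ExtremalChainData

section Aux

variable {L : Type*} [Lattice L] [Fintype L] [BoundedOrder L] {n : ℕ}

/-- Below any element not below `a` there is a join-irreducible not below `a`. -/
lemma exists_supIrred_le' {a b : L} (h : ¬ b ≤ a) :
    ∃ p : L, SupIrred p ∧ p ≤ b ∧ ¬ p ≤ a := by
  classical
  obtain ⟨w, hw, hmin⟩ : ∃ w ∈ (Finset.univ.filter fun w : L => w ≤ b ∧ ¬ w ≤ a),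
      ∀ x ∈ (Finset.univ.filter fun w : L => w ≤ b ∧ ¬ w ≤ a), ¬ x < w := by
    obtain ⟨w, hw⟩ := Finset.exists_minimal
      (s := Finset.univ.filter fun w : L => w ≤ b ∧ ¬ w ≤ a) ⟨b, by simp [h]⟩
    exact ⟨w, hw.prop, fun x hx hlt => hw.not_prop_of_lt hlt hx⟩
  simp only [Finset.mem_filter, Finset.mem_univ, true_and] at hw
  refine ⟨w, ⟨fun hm => hw.2 ((isMin_iff_eq_bot.mp hm) ▸ bot_le), ?_⟩, hw.1, hw.2⟩
  intro p q hpq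
  by_contra hcon
  push_neg at hcon
  have hp : p < w := lt_of_le_of_ne (hpq ▸ le_sup_left) hcon.1
  have hq : q < w := lt_of_le_of_ne (hpq ▸ le_sup_right) hcon.2
  have hpa : p ≤ a := by
    by_contra hpa
    exact hmin p (by simp [hp.le.trans hw.1, hpa]) hp
  have hqa : q ≤ a := by
    by_contra hqa
    exact hmin q (by simp [hq.le.trans hw.1, hqa]) hq
  exact hw.2 (hpq ▸ sup_le hpa hqa)

/-- Above any element not above `b` there is a meet-irreducible not above `b`. -/
lemma exists_infIrred_ge' {a b : L} (h : ¬ b ≤ a) :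
    ∃ p : L, InfIrred p ∧ a ≤ p ∧ ¬ b ≤ p := by
  classical
  obtain ⟨w, hw, hmax⟩ : ∃ w ∈ (Finset.univ.filter fun w : L => a ≤ w ∧ ¬ b ≤ w),
      ∀ x ∈ (Finset.univ.filter fun w : L => a ≤ w ∧ ¬ b ≤ w), ¬ w < x := by
    obtain ⟨w, hw⟩ := Finset.exists_maximal
      (s := Finset.univ.filter fun w : L => a ≤ w ∧ ¬ b ≤ w) ⟨a, by simp [h]⟩
    exact ⟨w, hw.prop, fun x hx hlt => hw.not_prop_of_gt hlt hx⟩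
  simp only [Finset.mem_filter, Finset.mem_univ, true_and] at hw
  refine ⟨w, ⟨fun hm => hw.2 ((isMax_iff_eq_top.mp hm) ▸ le_top), ?_⟩, hw.1, hw.2⟩
  intro p q hpq
  by_contra hcon
  push_neg at hcon
  have hp : w < p := lt_of_le_of_ne (hpq ▸ inf_le_left) (Ne.symm hcon.1)
  have hq : w < q := lt_of_le_of_ne (hpq ▸ inf_le_right) (Ne.symm hcon.2)
  have hpa : b ≤ p := by
    by_contra hpa
    exact hmax p (by simp [hw.1.trans hp.le, hpa]) hp
  have hqa : b ≤ q := by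
    by_contra hqa
    exact hmax q (by simp [hw.1.trans hq.le, hqa]) hq
  exact hw.2 (hpq ▸ le_inf hpa hqa)

/-- In a finite lattice any strict relation contains a cover above its bottom. -/
lemma exists_covBy_le' {y z : L} (h : y < z) : ∃ w : L, y ⋖ w ∧ w ≤ z := by
  classical
  obtain ⟨w, hw, hmin⟩ : ∃ w ∈ (Finset.univ.filter fun w : L => y < w ∧ w ≤ z),
      ∀ x ∈ (Finset.univ.filter fun w : L => y < w ∧ w ≤ z), ¬ x < w := by
    obtain ⟨w, hw⟩ := Finset.exists_minimal
      (s := Finset.univ.filter fun w : L => y < w ∧ w ≤ z) ⟨z, by simp [h]⟩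
    exact ⟨w, hw.prop, fun x hx hlt => hw.not_prop_of_lt hlt hx⟩
  simp only [Finset.mem_filter, Finset.mem_univ, true_and] at hw
  refine ⟨w, ⟨hw.1, fun u hu1 hu2 => ?_⟩, hw.2⟩
  exact hmin u (by simp [hu1, hu2.le.trans hw.2]) hu2

/-- An abstract counting lemma: a weakly increasing chain of finsets that starts
with the empty set, gains a new element at each of `n` steps, and ends with at
most `n` elements, gains exactly one element at each step. -/
lemma unique_new_elt {α : Type*} [DecidableEq α] {f : ℕ → Finset α} {n : ℕ}
    (h0 : (f 0).card = 0) (hn : (f n).card ≤ n)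
    (hsub : ∀ k, k < n → f k ⊆ f (k + 1))
    (hnew : ∀ k, k < n → ∃ a, a ∈ f (k + 1) ∧ a ∉ f k) :
    ∀ k, k < n → ∀ a b : α, a ∈ f (k + 1) → a ∉ f k → b ∈ f (k + 1) → b ∉ f k →
      a = b := by
  have hlt : ∀ k, k < n → (f k).card < (f (k + 1)).card := by
    intro k hk
    refine Finset.card_lt_card ((Finset.ssubset_iff_of_subset (hsub k hk)).mpr ?_)
    obtain ⟨a, ha1, ha2⟩ := hnew k hk
    exact ⟨a, ha1, ha2⟩
  have haux : ∀ d k, k + d ≤ n → (f k).card + d ≤ (f (k + d)).card := by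
    intro d
    induction d with
    | zero => intro k _; simpa using le_rfl
    | succ d ih =>
      intro k hk
      have h1 := ih k (by omega)
      have h2 := hlt (k + d) (by omega)
      have h3 : k + (d + 1) = (k + d) + 1 := by omega
      rw [h3]
      omega
  have hcard : ∀ k, k ≤ n → (f k).card = k := by
    intro k hk
    have l1 := haux k 0 (by omega)
    have l2 := haux (n - k) k (by omega)
    rw [show 0 + k = k by omega] at l1
    rw [show k + (n - k) = n by omega] at l2
    omega
  intro k hk a b ha1 ha2 hb1 hb2
  have hdiff : (f (k + 1) \ f k).card = 1 := by
    rw [Finset.card_sdiff_of_subset (hsub k hk), hcard (k + 1) (by omega), hcard k (by omega)]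
    omega
  exact Finset.card_le_one.mp (le_of_eq hdiff) a
    (Finset.mem_sdiff.mpr ⟨ha1, ha2⟩) b (Finset.mem_sdiff.mpr ⟨hb1, hb2⟩)

/-- Two self-bijections of `Fin n`, one pointwise at most the other, are equal. -/
lemma fin_equiv_eq_of_le {n : ℕ} (e1 e2 : Equiv.Perm (Fin n))
    (h : ∀ k, (e1 k : ℕ) ≤ (e2 k : ℕ)) : ∀ k, e1 k = e2 k := by
  have hsum : ∑ k : Fin n, ((e1 k : ℕ)) = ∑ k : Fin n, ((e2 k : ℕ)) := by
    rw [Equiv.sum_comp e1 (fun i : Fin n => (i : ℕ)),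
      Equiv.sum_comp e2 (fun i : Fin n => (i : ℕ))]
  intro k
  exact Fin.ext ((Finset.sum_eq_sum_iff_of_le (fun i _ => h i)).mp hsum k
    (Finset.mem_univ k))

end Aux

namespace ExtremalChainData

variable {L : Type*} [Lattice L] [Fintype L] [BoundedOrder L] {n : ℕ}
variable (D : ExtremalChainData L n)

lemma j_le_x_succ_s7 (i : Fin n) : D.j i ≤ D.x i.succ := by
  rw [D.x_eq_sup]
  exact Finset.le_sup (by simp [Fin.val_succ])

lemma x_castSucc_le_m (i : Fin n) : D.x i.castSucc ≤ D.m i := by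
  rw [D.x_eq_inf]
  exact Finset.inf_le (by simp)

lemma j_le_m_of_lt_s7 {i k : Fin n} (h : (i : ℕ) < (k : ℕ)) : D.j i ≤ D.m k := by
  refine (D.j_le_x_succ_s7 i).trans ((D.x_strictMono.monotone ?_).trans
    (D.x_castSucc_le_m k))
  rw [Fin.le_def]
  simpa using h

lemma j_not_le_m (i : Fin n) : ¬ D.j i ≤ D.m i := by
  intro h
  have hx : D.x i.succ ≤ D.x i.castSucc := by
    rw [D.x_eq_inf i.castSucc]
    apply Finset.le_inf
    intro k hk
    simp only [Finset.mem_filter, Finset.mem_univ, true_and, Fin.coe_castSucc] at hk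
    rcases eq_or_lt_of_le hk with he | hl
    · have hki : k = i := Fin.ext he.symm
      subst hki
      rw [D.x_eq_sup k.succ]
      apply Finset.sup_le
      intro q hq
      simp only [Finset.mem_filter, Finset.mem_univ, true_and, Fin.val_succ] at hq
      rcases Nat.lt_or_ge (q : ℕ) (k : ℕ) with hq' | hq'
      · exact D.j_le_m_of_lt_s7 hq'
      · have hqk : q = k := Fin.ext (by omega)
        subst hqk
        exact h
    · rw [D.x_eq_inf i.succ]
      exact Finset.inf_le (by simp [Fin.val_succ]; omega)
  exact (D.x_strictMono (Fin.castSucc_lt_succ (i := i))).not_ge hx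

/-- If every relation in `L` is overlapping, then every element of the fixed
maximal chain is left modular. -/
lemma leftModular_of_overlap
    (hQ : ∀ y z : L, y < z → (D.setM y ∩ D.setJ z).Nonempty) (t : Fin (n + 1)) :
    LeftModular (D.x t) := by
  intro y z hyz
  by_contra hne
  have huv : y ⊔ (D.x t ⊓ z) ≤ (y ⊔ D.x t) ⊓ z :=
    sup_le (le_inf le_sup_left hyz) (le_inf (inf_le_left.trans le_sup_right) inf_le_right)
  have hlt : y ⊔ (D.x t ⊓ z) < (y ⊔ D.x t) ⊓ z :=
    lt_of_le_of_ne huv (fun he => hne he.symm)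
  obtain ⟨i, hiM, hiJ⟩ := hQ _ _ hlt
  have hiM : y ⊔ (D.x t ⊓ z) ≤ D.m i := hiM
  have hiJ : D.j i ≤ (y ⊔ D.x t) ⊓ z := hiJ
  rcases Nat.lt_or_ge (i : ℕ) (t : ℕ) with hi | hi
  · have hjx : D.j i ≤ D.x t := by
      rw [D.x_eq_sup]
      exact Finset.le_sup (by simp [hi])
    exact D.j_not_le_m i
      ((le_inf hjx (hiJ.trans inf_le_right)).trans (le_sup_right.trans hiM))
  · have hxm : D.x t ≤ D.m i := by
      rw [D.x_eq_inf]
      exact Finset.inf_le (by simp [hi])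
    exact D.j_not_le_m i
      (hiJ.trans (inf_le_left.trans (sup_le (le_sup_left.trans hiM) hxm)))

/-- If every cover is overlapping then every relation is overlapping. -/
lemma overlap_rel_of_overlap_cov
    (hP : ∀ y z : L, y ⋖ z → (D.setM y ∩ D.setJ z).Nonempty) :
    ∀ y z : L, y < z → (D.setM y ∩ D.setJ z).Nonempty := by
  intro y z h
  obtain ⟨w, hw, hwz⟩ := exists_covBy_le' h
  obtain ⟨i, hiM, hiJ⟩ := hP y w hw
  exact ⟨i, hiM, le_trans hiJ hwz⟩

/-- If `L` possesses a maximal chain of left modular elements, then every cover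
relation is overlapping. -/
lemma overlap_cov_of_trim (c : Fin (n + 1) → L) (hsm : StrictMono c)
    (hlm : ∀ i, LeftModular (c i)) :
    ∀ y z : L, y ⋖ z → (D.setM y ∩ D.setJ z).Nonempty := by
  classical
  -- the chain runs from ⊥ to ⊤
  have hc0 : c 0 = ⊥ := by
    by_contra h
    have hd : StrictMono (Fin.cases ⊥ c : Fin (n + 2) → L) := by
      rw [Fin.strictMono_iff_lt_succ]
      intro i
      refine Fin.cases ?_ (fun q => ?_) i
      · rw [Fin.castSucc_zero]
        simp only [Fin.cases_zero, Fin.cases_succ]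
        exact bot_lt_iff_ne_bot.mpr h
      · rw [← Fin.succ_castSucc]
        simp only [Fin.cases_succ]
        exact hsm (Fin.castSucc_lt_succ (i := q))
    exact absurd (D.maxlen (n + 1) _ hd) (by omega)
  have hctop : c (Fin.last n) = ⊤ := by
    by_contra h
    have hd : StrictMono (Fin.snoc c ⊤ : Fin (n + 2) → L) := by
      rw [Fin.strictMono_iff_lt_succ]
      intro i
      rw [Fin.snoc_castSucc]
      refine Fin.lastCases ?_ (fun q => ?_) i
      · rw [Fin.succ_last, Fin.snoc_last]
        exact lt_top_iff_ne_top.mpr h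
      · rw [Fin.succ_castSucc, Fin.snoc_castSucc]
        exact hsm (Fin.castSucc_lt_succ (i := q))
    exact absurd (D.maxlen (n + 1) _ hd) (by omega)
  -- a ℕ-indexed version of the chain
  set ck : ℕ → L := fun k => c ⟨min k n, by omega⟩ with hck
  have hck0 : ck 0 = ⊥ := by
    have h : (⟨min 0 n, by omega⟩ : Fin (n + 1)) = 0 := Fin.ext (by simp)
    exact (congrArg c h).trans hc0
  have hckn : ck n = ⊤ := by
    have h : (⟨min n n, by omega⟩ : Fin (n + 1)) = Fin.last n := Fin.ext (by simp)
    exact (congrArg c h).trans hctop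
  have hckM : Monotone ck := by
    intro p q hpq
    exact hsm.monotone (by rw [Fin.mk_le_mk]; omega)
  have hcklt : ∀ k, k < n → ck k < ck (k + 1) := by
    intro k hk
    exact hsm (by rw [Fin.mk_lt_mk]; omega)
  have hcksucc : ∀ i : Fin n, ck ((i : ℕ) + 1) = c i.succ := by
    intro i
    have h : (⟨min ((i : ℕ) + 1) n, by omega⟩ : Fin (n + 1)) = i.succ :=
      Fin.ext (by simp [Fin.val_succ])
    exact congrArg c h
  have hckcast : ∀ i : Fin n, ck (i : ℕ) = c i.castSucc := by
    intro i
    have h : (⟨min (i : ℕ) n, by omega⟩ : Fin (n + 1)) = i.castSucc :=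
      Fin.ext (by simp)
    exact congrArg c h
  -- counting join-irreducibles along the chain
  set Jk : ℕ → Finset L := fun k => Finset.univ.filter fun a => SupIrred a ∧ a ≤ ck k
    with hJk
  set Mk : ℕ → Finset L := fun k => Finset.univ.filter fun a => InfIrred a ∧ ck k ≤ a
    with hMk
  have hJmem : ∀ k (a : L), a ∈ Jk k ↔ SupIrred a ∧ a ≤ ck k := by
    intro k a; rw [hJk]; simp
  have hMmem : ∀ k (a : L), a ∈ Mk k ↔ InfIrred a ∧ ck k ≤ a := by
    intro k a; rw [hMk]; simp
  have hallJ : (Finset.univ.filter fun a : L => SupIrred a).card = n := by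
    have himg : (Finset.univ.filter fun a : L => SupIrred a) =
        Finset.image D.j Finset.univ := by
      ext a
      simp only [Finset.mem_filter, Finset.mem_univ, true_and, Finset.mem_image]
      constructor
      · intro ha
        obtain ⟨i, hi⟩ := D.j_surj a ha
        exact ⟨i, hi⟩

      · rintro ⟨i, -, rfl⟩
        exact D.j_irr i
    rw [himg, Finset.card_image_of_injective _ D.j_inj, Finset.card_univ,
      Fintype.card_fin]
  have hallM : (Finset.univ.filter fun a : L => InfIrred a).card = n := by
    have himg : (Finset.univ.filter fun a : L => InfIrred a) =
        Finset.image D.m Finset.univ := by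
      ext a
      simp only [Finset.mem_filter, Finset.mem_univ, true_and, Finset.mem_image]
      constructor
      · intro ha
        obtain ⟨i, hi⟩ := D.m_surj a ha
        exact ⟨i, hi⟩
      · rintro ⟨i, -, rfl⟩
        exact D.m_irr i
    rw [himg, Finset.card_image_of_injective _ D.m_inj, Finset.card_univ,
      Fintype.card_fin]
  -- uniqueness of the new join-irreducible at each step
  have hJuniq : ∀ k, k < n → ∀ a b : L,
      SupIrred a → a ≤ ck (k + 1) → ¬ a ≤ ck k →
      SupIrred b → b ≤ ck (k + 1) → ¬ b ≤ ck k → a = b := by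
    have h0 : (Jk 0).card = 0 := by
      rw [Finset.card_eq_zero]
      ext a
      rw [hJmem, hck0]
      simp only [Finset.notMem_empty, iff_false, not_and, le_bot_iff]
      exact fun hs he => hs.ne_bot he
    have hn' : (Jk n).card ≤ n := by
      refine le_of_eq ?_
      rw [show Jk n = Finset.univ.filter fun a : L => SupIrred a from ?_, hallJ]
      ext a
      rw [hJmem, hckn]
      simp
    have hsub : ∀ k, k < n → Jk k ⊆ Jk (k + 1) := by
      intro k hk a ha
      rw [hJmem] at ha ⊢
      exact ⟨ha.1, ha.2.trans (hckM (by omega))⟩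
    have hnewJ : ∀ k, k < n → ∃ a, a ∈ Jk (k + 1) ∧ a ∉ Jk k := by
      intro k hk
      obtain ⟨p, hp1, hp2, hp3⟩ := exists_supIrred_le' (hcklt k hk).not_ge
      refine ⟨p, ?_, ?_⟩
      · rw [hJmem]; exact ⟨hp1, hp2⟩
      · rw [hJmem]; exact fun h => hp3 h.2
    intro k hk a b ha1 ha2 ha3 hb1 hb2 hb3
    refine unique_new_elt h0 hn' hsub hnewJ k hk a b ?_ ?_ ?_ ?_
    · rw [hJmem]; exact ⟨ha1, ha2⟩
    · rw [hJmem]; exact fun h => ha3 h.2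
    · rw [hJmem]; exact ⟨hb1, hb2⟩
    · rw [hJmem]; exact fun h => hb3 h.2
  -- uniqueness of the lost meet-irreducible at each step
  have hMuniq : ∀ k, k < n → ∀ a b : L,
      InfIrred a → ck k ≤ a → ¬ ck (k + 1) ≤ a →
      InfIrred b → ck k ≤ b → ¬ ck (k + 1) ≤ b → a = b := by
    set f : ℕ → Finset L :=
      fun k => (Finset.univ.filter fun a : L => InfIrred a) \ Mk k with hf
    have hfmem : ∀ k (a : L), a ∈ f k ↔ InfIrred a ∧ ¬ ck k ≤ a := by
      intro k a
      rw [hf]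
      simp only [Finset.mem_sdiff, Finset.mem_filter, Finset.mem_univ, true_and]
      rw [hMmem]
      tauto
    have h0 : (f 0).card = 0 := by
      rw [Finset.card_eq_zero]
      ext a
      rw [hfmem, hck0]
      simp
    have hn' : (f n).card ≤ n := by
      refine le_of_eq ?_
      rw [show f n = Finset.univ.filter fun a : L => InfIrred a from ?_, hallM]
      ext a
      rw [hfmem, hckn]
      simp only [Finset.mem_filter, Finset.mem_univ, true_and, top_le_iff]
      exact ⟨fun h => h.1, fun h => ⟨h, fun he => h.ne_top he⟩⟩
    have hsub : ∀ k, k < n → f k ⊆ f (k + 1) := by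
      intro k hk a ha
      rw [hfmem] at ha ⊢
      exact ⟨ha.1, fun h => ha.2 ((hckM (by omega : k ≤ k + 1)).trans h)⟩
    have hnewf : ∀ k, k < n → ∃ a, a ∈ f (k + 1) ∧ a ∉ f k := by
      intro k hk
      obtain ⟨p, hp1, hp2, hp3⟩ := exists_infIrred_ge' (hcklt k hk).not_ge
      refine ⟨p, ?_, ?_⟩
      · rw [hfmem]; exact ⟨hp1, hp3⟩
      · rw [hfmem]; exact fun h => h.2 hp2
    intro k hk a b ha1 ha2 ha3 hb1 hb2 hb3
    refine unique_new_elt h0 hn' hsub hnewf k hk a b ?_ ?_ ?_ ?_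
    · rw [hfmem]; exact ⟨ha1, ha3⟩
    · rw [hfmem]; exact fun h => h.2 ha2
    · rw [hfmem]; exact ⟨hb1, hb3⟩
    · rw [hfmem]; exact fun h => h.2 hb2
  -- the numbering of irreducibles induced by the chain c
  have hj'ex : ∀ i : Fin n, ∃ a : L, SupIrred a ∧ a ≤ ck ((i : ℕ) + 1) ∧
      ¬ a ≤ ck (i : ℕ) := fun i => exists_supIrred_le' (hcklt i i.isLt).not_ge
  choose j' hj'1 hj'2 hj'3 using hj'ex
  have hm'ex : ∀ i : Fin n, ∃ a : L, InfIrred a ∧ ck (i : ℕ) ≤ a ∧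
      ¬ ck ((i : ℕ) + 1) ≤ a := by
    intro i
    obtain ⟨p, h1, h2, h3⟩ := exists_infIrred_ge' (hcklt i i.isLt).not_ge
    exact ⟨p, h1, h2, h3⟩
  choose m' hm'1 hm'2 hm'3 using hm'ex
  have hj'inj : Function.Injective j' := by
    intro a b hab
    by_contra hne
    rcases Nat.lt_or_ge (a : ℕ) (b : ℕ) with h | h
    · exact hj'3 b (hab ▸ ((hj'2 a).trans (hckM (by omega))))
    · have h' : (b : ℕ) < (a : ℕ) := by
        rcases Nat.lt_or_ge (b : ℕ) (a : ℕ) with h' | h'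
        · exact h'
        · exact absurd (Fin.ext (le_antisymm h h')).symm hne
      exact hj'3 a (hab ▸ ((hj'2 b).trans (hckM (by omega))))
  have hm'inj : Function.Injective m' := by
    intro a b hab
    by_contra hne
    rcases Nat.lt_or_ge (a : ℕ) (b : ℕ) with h | h
    · exact hm'3 a (hab ▸ ((hckM (by omega : (a : ℕ) + 1 ≤ (b : ℕ))).trans (hm'2 b)))
    · have h' : (b : ℕ) < (a : ℕ) := by
        rcases Nat.lt_or_ge (b : ℕ) (a : ℕ) with h' | h'
        · exact h'
        · exact absurd (Fin.ext (le_antisymm h h')).symm hne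
      exact hm'3 b (hab ▸ ((hckM (by omega : (b : ℕ) + 1 ≤ (a : ℕ))).trans (hm'2 a)))
  -- match the numberings of D and of c
  have hσex : ∀ i : Fin n, ∃ k : Fin n, D.j k = j' i :=
    fun i => D.j_surj (j' i) (hj'1 i)
  choose σ hσ using hσex
  have hτex : ∀ i : Fin n, ∃ k : Fin n, D.m k = m' i :=
    fun i => D.m_surj (m' i) (hm'1 i)
  choose τ hτ using hτex
  have hσinj : Function.Injective σ := by
    intro a b hab
    apply hj'inj
    rw [← hσ a, ← hσ b, hab]
  have hτinj : Function.Injective τ := by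
    intro a b hab
    apply hm'inj
    rw [← hτ a, ← hτ b, hab]
  let eσ : Equiv.Perm (Fin n) :=
    Equiv.ofBijective σ (Finite.injective_iff_bijective.mp hσinj)
  let eτ : Equiv.Perm (Fin n) :=
    Equiv.ofBijective τ (Finite.injective_iff_bijective.mp hτinj)
  have heσ : ∀ i, eσ i = σ i := fun _ => rfl
  have heτ : ∀ i, eτ i = τ i := fun _ => rfl
  have key : ∀ k, ((eτ.symm k : Fin n) : ℕ) ≤ ((eσ.symm k : Fin n) : ℕ) := by
    intro k
    by_contra hcon
    push_neg at hcon
    have h1 : D.j k = j' (eσ.symm k) := by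
      have h := hσ (eσ.symm k)
      rw [← heσ (eσ.symm k), eσ.apply_symm_apply k] at h
      exact h
    have h2 : D.m k = m' (eτ.symm k) := by
      have h := hτ (eτ.symm k)
      rw [← heτ (eτ.symm k), eτ.apply_symm_apply k] at h
      exact h
    have htri : j' (eσ.symm k) ≤ m' (eτ.symm k) :=
      (hj'2 _).trans ((hckM (by omega)).trans (hm'2 _))
    exact D.j_not_le_m k (by rw [h1, h2]; exact htri)
  have hστ : ∀ i, τ i = σ i := by
    intro i
    have hpt := fin_equiv_eq_of_le eτ.symm eσ.symm key (σ i)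
    have h1 : eτ.symm (σ i) = i := by
      rw [hpt, ← heσ i, eσ.symm_apply_apply]
    have h2 := eτ.apply_symm_apply (σ i)
    rw [h1, heτ] at h2
    exact h2
  -- the main argument: label a cover and use the unique new irreducibles
  intro y z hyz
  have hn1 : 1 ≤ n := by
    have hsm2 : StrictMono ![y, z] := by
      rw [Fin.strictMono_iff_lt_succ]
      intro i
      fin_cases i
      simpa using hyz.lt
    exact D.maxlen 1 ![y, z] hsm2
  set S : Finset (Fin n) := Finset.univ.filter fun i => y ⊔ (c i.succ ⊓ z) = z
    with hS
  have hSmem : ∀ i : Fin n, i ∈ S ↔ y ⊔ (c i.succ ⊓ z) = z := by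
    intro i; rw [hS]; simp
  have hSne : S.Nonempty := by
    refine ⟨⟨n - 1, by omega⟩, ?_⟩
    rw [hSmem]
    have hlast : (⟨n - 1, by omega⟩ : Fin n).succ = Fin.last n :=
      Fin.ext (by simp [Fin.val_succ]; omega)
    rw [hlast, hctop, top_inf_eq, sup_eq_right.mpr hyz.le]
  set i : Fin n := S.min' hSne with hi
  have hiS : i ∈ S := S.min'_mem hSne
  have h1 : y ⊔ (c i.succ ⊓ z) = z := (hSmem i).mp hiS
  have h0 : c i.castSucc ⊓ z ≤ y := by
    rcases Nat.eq_zero_or_pos (i : ℕ) with hz | hz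
    · have : i.castSucc = 0 := Fin.ext (by simpa using hz)
      rw [this, hc0, bot_inf_eq]
      exact bot_le
    · set k : Fin n := ⟨(i : ℕ) - 1, by omega⟩ with hk
      have hksucc : k.succ = i.castSucc := Fin.ext (by simp [hk, Fin.val_succ]; omega)
      have hkS : k ∉ S := by
        intro hkS
        have := S.min'_le k hkS
        rw [← hi] at this
        have hlt : k < i := by rw [Fin.lt_def]; simp [hk]; omega
        exact absurd this (not_le.mpr hlt)
      have hne : y ⊔ (c i.castSucc ⊓ z) ≠ z := by
        rw [← hksucc]
        intro he
        exact hkS ((hSmem k).mpr he)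
      have hle2 : y ⊔ (c i.castSucc ⊓ z) ≤ z := sup_le hyz.le inf_le_right
      rcases hyz.eq_or_eq le_sup_left hle2 with he | he
      · exact sup_eq_left.mp he
      · exact absurd he hne
  -- the new join-irreducible at step i lies below z
  have hA : ¬ c i.succ ⊓ z ≤ c i.castSucc := by
    intro h
    have hle : c i.succ ⊓ z ≤ y := (le_inf h inf_le_right).trans h0
    have hzy : z ≤ y := by
      rw [← h1]
      exact sup_le le_rfl hle
    exact hyz.lt.not_ge hzy
  obtain ⟨a, haI, ha2, ha3⟩ := exists_supIrred_le' hA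
  have haj' : a = j' i := by
    refine hJuniq (i : ℕ) i.isLt a (j' i) haI ?_ ?_ (hj'1 i) (hj'2 i) (hj'3 i)
    · rw [hcksucc i]
      exact ha2.trans inf_le_left
    · rw [hckcast i]
      exact ha3
  have hjz : j' i ≤ z := haj' ▸ (ha2.trans inf_le_right)
  -- the lost meet-irreducible at step i lies above y
  have hlmc : (y ⊔ c i.castSucc) ⊓ z = y := by
    rw [hlm i.castSucc y z hyz.le, sup_eq_left.mpr h0]
  have hB : ¬ c i.succ ≤ y ⊔ c i.castSucc := by
    intro h
    have h2 : z ≤ y ⊔ c i.succ := by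
      have hx := hlm i.succ y z hyz.le
      rw [h1] at hx
      exact inf_eq_right.mp hx
    have h3 : z ≤ y ⊔ c i.castSucc := h2.trans (sup_le le_sup_left h)
    have hzy : z ≤ y := by
      rw [← hlmc]
      exact le_inf h3 le_rfl
    exact hyz.lt.not_ge hzy
  obtain ⟨b, hbI, hb2, hb3⟩ := exists_infIrred_ge' hB
  have hbm' : b = m' i := by
    refine hMuniq (i : ℕ) i.isLt b (m' i) hbI ?_ ?_ (hm'1 i) (hm'2 i) (hm'3 i)
    · rw [hckcast i]
      exact le_sup_right.trans hb2
    · rw [hcksucc i]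
      exact hb3
  have hmy : y ≤ m' i := hbm' ▸ (le_sup_left.trans hb2)
  -- conclude
  refine ⟨σ i, ?_, ?_⟩
  · show y ≤ D.m (σ i)
    rw [← hστ i, hτ i]
    exact hmy
  · show D.j (σ i) ≤ z
    rw [hσ i]
    exact hjz

end ExtremalChainData

/-- An extremal lattice is trim (possesses a maximal chain of left modular
elements) iff every cover relation `y ⋖ z` is overlapping (`y_M ∩ z_J ≠ ∅`)
iff every relation `y < z` is overlapping. -/
theorem trim_iff_overlapping {L : Type*} [Lattice L] [Fintype L] [BoundedOrder L]
    {n : ℕ} (D : ExtremalChainData L n) :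
    ((∃ c : Fin (n + 1) → L, StrictMono c ∧ ∀ i, LeftModular (c i)) ↔
      (∀ y z : L, y ⋖ z → (D.setM y ∩ D.setJ z).Nonempty)) ∧
    ((∀ y z : L, y ⋖ z → (D.setM y ∩ D.setJ z).Nonempty) ↔
      (∀ y z : L, y < z → (D.setM y ∩ D.setJ z).Nonempty)) := by
  constructor
  · constructor
    · rintro ⟨c, hsm, hlm⟩
      exact D.overlap_cov_of_trim c hsm hlm
    · intro hP
      exact ⟨D.x, D.x_strictMono,
        fun t => D.leftModular_of_overlap (D.overlap_rel_of_overlap_cov hP) t⟩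
  · constructor
    · intro hP
      exact D.overlap_rel_of_overlap_cov hP
    · intro hQ y z hyz
      exact hQ y z hyz.lt
end
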